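/- Let m₁,…,m_r and n be positive integers with m = m₁+⋯+m_r. If the Kronecker product K_{m₁,…,m_r} × Kₙ admits an equitable k-coloring with k < ⌈mn/(m+1)⌉, then the complete multipartite graph K_{m₁n,…,m_rn} admits an equitable k-coloring. -/

import Mathlib

open SimpleGraph

/-- Kronecker (tensor) product of simple graphs. -/
def kronecker {α β : Type*} (G : SimpleGraph α) (H : SimpleGraph β) :
    SimpleGraph (α × β) where
  Adj p q := G.Adj p.1 q.1 ∧ H.Adj p.2 q.2
  symm := ⟨fun _ _ h => ⟨G.adj_symm h.1, H.adj_symm h.2⟩⟩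
  loopless := ⟨fun _ h => G.irrefl h.1⟩

/-- `G` admits an equitable `k`-coloring: a proper coloring with `k` colors
whose color classes differ in size by at most `1`. -/
def EquitablyColorable {V : Type*} [Fintype V] (G : SimpleGraph V) (k : ℕ) : Prop :=
  ∃ f : G.Coloring (Fin k), ∀ i j : Fin k,
    (Finset.univ.filter fun v => f v = i).card ≤
      (Finset.univ.filter fun v => f v = j).card + 1

/-- The natural equivalence of vertex sets. -/
def kEquiv {r : ℕ} (m : Fin r → ℕ) (n : ℕ) :
    ((i : Fin r) × Fin (m i * n)) ≃ ((i : Fin r) × Fin (m i)) × Fin n :=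
  (Equiv.sigmaCongrRight fun i => finProdFinEquiv.symm).trans
    (Equiv.sigmaProdDistrib (fun i => Fin (m i)) (Fin n)).symm

lemma kEquiv_fst_fst {r : ℕ} (m : Fin r → ℕ) (n : ℕ) (v : (i : Fin r) × Fin (m i * n)) :
    ((kEquiv m n v).1).1 = v.1 := by
  rcases v with ⟨i, a⟩; rfl

/-- Lemma 3.1: if `K_{m₁,…,m_r} × Kₙ` is equitably `k`-colorable for some
`k < ⌈mn/(m+1)⌉` where `m = m₁ + ⋯ + m_r`, then `K_{m₁n,…,m_rn}` is equitably
`k`-colorable. -/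
theorem equitable_of_kronecker_equitable {r n k : ℕ} (m : Fin r → ℕ)
    (hm : ∀ i, 0 < m i) (hn : 0 < n)
    (hk : k < ((∑ i, m i) * n + (∑ i, m i)) / ((∑ i, m i) + 1))
    (h : EquitablyColorable
      (kronecker (completeMultipartiteGraph fun i => Fin (m i))
        (⊤ : SimpleGraph (Fin n))) k) :
    EquitablyColorable (completeMultipartiteGraph fun i : Fin r => Fin (m i * n)) k := by
  obtain ⟨f, hf⟩ := h
  set M := ∑ i, m i with hM
  -- arithmetic: k * (M + 1) < M * n
  have hkM : (k + 1) * (M + 1) ≤ M * n + M :=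
    (Nat.le_div_iff_mul_le (Nat.succ_pos M)).mp hk
  have hkM' : k * (M + 1) < M * n := by nlinarith
  -- total number of vertices
  have hcard : Fintype.card (((i : Fin r) × Fin (m i)) × Fin n) = M * n := by
    simp [Fintype.card_prod, Fintype.card_sigma, hM]
  have hsum : ∑ c : Fin k, (Finset.univ.filter fun v : ((i : Fin r) × Fin (m i)) × Fin n => f v = c).card
      = M * n := by
    rw [← hcard, ← Finset.card_univ]
    exact (Finset.card_eq_sum_card_fiberwise (fun v _ => Finset.mem_univ (f v))).symm
  -- some class has more than M + 1 elements
  have hbig : ∃ c : Fin k, M + 1 < (Finset.univ.filter fun v : ((i : Fin r) × Fin (m i)) × Fin n => f v = c).card := by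
    by_contra hcon
    push_neg at hcon
    have : ∑ c : Fin k, (Finset.univ.filter fun v : ((i : Fin r) × Fin (m i)) × Fin n => f v = c).card
        ≤ ∑ _c : Fin k, (M + 1) := Finset.sum_le_sum fun c _ => hcon c
    simp only [Finset.sum_const, Finset.card_univ, Fintype.card_fin, smul_eq_mul] at this
    omega
  obtain ⟨c0, hc0⟩ := hbig
  -- every class has at least M + 1 elements
  have hall : ∀ c : Fin k, M + 1 ≤ (Finset.univ.filter fun v : ((i : Fin r) × Fin (m i)) × Fin n => f v = c).card := by
    intro c
    have := hf c0 c
    omega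
  -- each slice {v | v.2 = t} has exactly M elements
  have hslice : ∀ t : Fin n,
      (Finset.univ.filter fun v : ((i : Fin r) × Fin (m i)) × Fin n => v.2 = t).card = M := by
    intro t
    have : (Finset.univ.filter fun v : ((i : Fin r) × Fin (m i)) × Fin n => v.2 = t)
        = Finset.univ.map ⟨fun a : (i : Fin r) × Fin (m i) => (a, t),
            fun a b hab => (Prod.ext_iff.mp hab).1⟩ := by
      ext v
      simp only [Finset.mem_filter, Finset.mem_univ, true_and, Finset.mem_map,
        Function.Embedding.coeFn_mk]
      constructor
      · intro hv; exact ⟨v.1, by rw [← hv]; rfl⟩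
      · rintro ⟨a, rfl⟩; rfl
    rw [this, Finset.card_map, Finset.card_univ, Fintype.card_sigma]
    simp [hM]
  -- every class contains a vertex outside any given slice
  have hescape : ∀ (c : Fin k) (t : Fin n), ∃ u : ((i : Fin r) × Fin (m i)) × Fin n, f u = c ∧ u.2 ≠ t := by
    intro c t
    by_contra hcon
    push_neg at hcon
    have hsub : (Finset.univ.filter fun v : ((i : Fin r) × Fin (m i)) × Fin n => f v = c)
        ⊆ (Finset.univ.filter fun v : ((i : Fin r) × Fin (m i)) × Fin n => v.2 = t) := by
      intro v hv
      simp only [Finset.mem_filter, Finset.mem_univ, true_and] at hv ⊢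
      exact hcon v hv
    have := Finset.card_le_card hsub
    rw [hslice t] at this
    have := hall c
    omega
  set e := kEquiv m n
  -- the coloring of the complete multipartite graph
  have hproper : ∀ v w : (i : Fin r) × Fin (m i * n),
      (completeMultipartiteGraph fun i : Fin r => Fin (m i * n)).Adj v w →
        f (e v) ≠ f (e w) := by
    intro v w hvw heq
    have hne : v.1 ≠ w.1 := hvw
    by_cases ht : (e v).2 = (e w).2
    · -- same slice: pick an escaping vertex
      obtain ⟨u, hu, hut⟩ := hescape (f (e v)) ((e v).2)
      rcases ne_or_eq u.1.1 (e v).1.1 with h1 | h1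
      · have hadj : (kronecker (completeMultipartiteGraph fun i => Fin (m i))
            (⊤ : SimpleGraph (Fin n))).Adj u (e v) := ⟨h1, hut⟩
        exact f.valid hadj (hu.trans rfl)
      · have h2 : u.1.1 ≠ (e w).1.1 := by
          rw [h1, kEquiv_fst_fst, kEquiv_fst_fst]; exact hne
        have hut' : u.2 ≠ (e w).2 := ht ▸ hut
        have hadj : (kronecker (completeMultipartiteGraph fun i => Fin (m i))
            (⊤ : SimpleGraph (Fin n))).Adj u (e w) := ⟨h2, hut'⟩
        exact f.valid hadj (hu.trans heq)
    · -- different slices: e v and e w are adjacent in the Kronecker product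
      have h1 : (e v).1.1 ≠ (e w).1.1 := by
        rw [kEquiv_fst_fst, kEquiv_fst_fst]; exact hne
      have hadj : (kronecker (completeMultipartiteGraph fun i => Fin (m i))
          (⊤ : SimpleGraph (Fin n))).Adj (e v) (e w) := ⟨h1, ht⟩
      exact f.valid hadj heq
  refine ⟨Coloring.mk (fun v => f (e v)) (fun {v w} hadj => hproper v w hadj), ?_⟩
  intro i j
  have hcardeq : ∀ c : Fin k,
      (Finset.univ.filter fun v : (i : Fin r) × Fin (m i * n) => f (e v) = c).card
        = (Finset.univ.filter fun v : ((i : Fin r) × Fin (m i)) × Fin n => f v = c).card := by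
    intro c
    exact Finset.card_equiv e (by simp)
  show (Finset.univ.filter fun v => f (e v) = i).card ≤
    (Finset.univ.filter fun v => f (e v) = j).card + 1
  rw [hcardeq, hcardeq]
  exact hf i j
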